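/- Let {D^k}_{k≥1} be a sequence of nonnegative reals. Suppose there exist exponents 0 < α₂ < α₁ ≤ 1 and constants C₁, C₂ > 0 such that D^{k+1} ≤ (1 − C₁/k^{α₂}) D^k + C₂(1/k^{2α₂} + 1/k^{2α₁−α₂}) for all sufficiently large k. Then there exists a constant C > 0 such that D^k ≤ C(1/k^{α₂} + 1/k^{2(α₁−α₂)}) for all k ≥ 1. -/

import Mathlib

open Filter

lemma aux_decay (x γ : ℝ) (hx : 1 ≤ x) (hγ2 : γ ≤ 2) :
    (1 - 2 / x) * (1 / x ^ γ) ≤ 1 / (x + 1) ^ γ := by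
  have hx0 : (0:ℝ) < x := by linarith
  have hx1 : (0:ℝ) < x + 1 := by linarith
  have hb0 : 0 < x / (x + 1) := by positivity
  have hb1 : x / (x + 1) ≤ 1 := by rw [div_le_one hx1]; linarith
  have key : (x / (x+1)) ^ (2:ℝ) ≤ (x / (x+1)) ^ γ :=
    Real.rpow_le_rpow_of_exponent_ge hb0 hb1 hγ2
  have h2 : (x / (x+1)) ^ (2:ℝ) = (x / (x+1))^(2:ℕ) := by
    rw [show (2:ℝ) = ((2:ℕ):ℝ) by norm_num, Real.rpow_natCast]
  have tx1 : (2/x) * x = 2 := by field_simp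
  have tx2 : (2/x) * x^(2:ℕ) = 2*x := by field_simp
  have ht0 : 0 ≤ 2/x := by positivity
  have h3 : 1 - 2/x ≤ (x/(x+1))^(2:ℕ) := by
    rw [div_pow, le_div_iff₀ (by positivity)]
    nlinarith [tx1, tx2, ht0]
  have e1 : (1:ℝ)/(x+1)^γ = (1/x^γ) * (x/(x+1))^γ := by
    rw [Real.div_rpow hx0.le hx1.le]
    have hxγ : (0:ℝ) < x ^ γ := Real.rpow_pos_of_pos hx0 γ
    have hx1γ : (0:ℝ) < (x+1) ^ γ := Real.rpow_pos_of_pos hx1 γ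
    field_simp
  rw [e1, mul_comm (1/x^γ)]
  apply mul_le_mul_of_nonneg_right _ (by positivity)
  calc 1 - 2/x ≤ (x/(x+1))^(2:ℕ) := h3
    _ = (x/(x+1))^(2:ℝ) := h2.symm
    _ ≤ (x/(x+1))^γ := key

/-- Recursion lemma for positive sequences: if
`D (k+1) ≤ (1 - C₁/k^{α₂}) D k + C₂ (1/k^{2α₂} + 1/k^{2α₁-α₂})` for all large `k`,
with `0 < α₂ < α₁ ≤ 1`, then `D k ≤ C (1/k^{α₂} + 1/k^{2(α₁-α₂)})` for all `k ≥ 1`. -/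
theorem stmt8 (D : ℕ → ℝ) (hD : ∀ k, 0 ≤ D k)
    (α1 α2 C1 C2 : ℝ) (h2 : 0 < α2) (h21 : α2 < α1) (h1 : α1 ≤ 1)
    (hC1 : 0 < C1) (hC2 : 0 < C2)
    (hrec : ∃ K : ℕ, ∀ k ≥ K, D (k + 1) ≤ (1 - C1 / (k : ℝ) ^ α2) * D k
        + C2 * (1 / (k : ℝ) ^ (2 * α2) + 1 / (k : ℝ) ^ (2 * α1 - α2))) :
    ∃ C > (0 : ℝ), ∀ k : ℕ, 1 ≤ k →
      D k ≤ C * (1 / (k : ℝ) ^ α2 + 1 / (k : ℝ) ^ (2 * (α1 - α2))) := by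
  obtain ⟨K, hK⟩ := hrec
  have h1a2 : (0:ℝ) < 1 - α2 := by linarith
  have t1 : Tendsto (fun k : ℕ => (k:ℝ) ^ (1 - α2)) atTop atTop :=
    (tendsto_rpow_atTop h1a2).comp tendsto_natCast_atTop_atTop
  have t2 : Tendsto (fun k : ℕ => (k:ℝ) ^ α2) atTop atTop :=
    (tendsto_rpow_atTop h2).comp tendsto_natCast_atTop_atTop
  obtain ⟨K1, hK1⟩ := eventually_atTop.mp (t1.eventually_ge_atTop (4 / C1))
  obtain ⟨K2, hK2⟩ := eventually_atTop.mp (t2.eventually_ge_atTop C1)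
  obtain ⟨K0, hK01, hK0K, hK0K1, hK0K2⟩ :
      ∃ K0 : ℕ, 1 ≤ K0 ∧ K ≤ K0 ∧ K1 ≤ K0 ∧ K2 ≤ K0 :=
    ⟨max (max K1 K2) (max K 1), by omega, by omega, by omega, by omega⟩
  obtain ⟨B, hB, hB0, hBk⟩ :
      ∃ B : ℝ, B = ∑ i ∈ Finset.range (K0+1), D i ∧ 0 ≤ B ∧ ∀ k ≤ K0, D k ≤ B := by
    refine ⟨_, rfl, Finset.sum_nonneg (fun i _ => hD i), fun k hk => ?_⟩
    exact Finset.single_le_sum (fun i _ => hD i) (Finset.mem_range.mpr (by omega))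
  have hK0pos : (0:ℝ) < (K0:ℝ) := by exact_mod_cast hK01
  obtain ⟨M, hM, hM0, hMC, hMB⟩ :
      ∃ M : ℝ, M = 2*C2/C1 + B * (K0:ℝ)^α2 + 1 ∧ 0 < M ∧ 2*C2/C1 ≤ M ∧
        B * (K0:ℝ)^α2 ≤ M := by
    refine ⟨_, rfl, by positivity, ?_, ?_⟩
    · have : 0 ≤ B * (K0:ℝ)^α2 := by positivity
      linarith
    · have : 0 ≤ 2*C2/C1 := by positivity
      linarith
  set ψ : ℕ → ℝ := fun k => 1 / (k:ℝ) ^ α2 + 1 / (k:ℝ) ^ (2 * (α1 - α2)) with hψ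
  have hψpos : ∀ k : ℕ, 1 ≤ k → 0 < ψ k := by
    intro k hk
    have hk0 : (0:ℝ) < (k:ℝ) := by exact_mod_cast hk
    have p1 := Real.rpow_pos_of_pos hk0 α2
    have p2 := Real.rpow_pos_of_pos hk0 (2*(α1-α2))
    simp only [hψ]
    positivity
  -- base case
  have hbase : ∀ k : ℕ, 1 ≤ k → k ≤ K0 → D k ≤ M * ψ k := by
    intro k hk1 hkK
    have hk0 : (0:ℝ) < (k:ℝ) := by exact_mod_cast hk1
    have hkα : (0:ℝ) < (k:ℝ)^α2 := Real.rpow_pos_of_pos hk0 α2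
    have h4 : B ≤ M / (k:ℝ)^α2 := by
      rw [le_div_iff₀ hkα]
      calc B * (k:ℝ)^α2 ≤ B * (K0:ℝ)^α2 := by
            apply mul_le_mul_of_nonneg_left _ hB0
            exact Real.rpow_le_rpow hk0.le (by exact_mod_cast hkK) h2.le
        _ ≤ M := hMB
    have h5 : M / (k:ℝ)^α2 ≤ M * ψ k := by
      have e : M / (k:ℝ)^α2 = M * (1/(k:ℝ)^α2) := by ring
      have h6 : 0 ≤ M * (1/(k:ℝ)^(2*(α1-α2))) := by positivity
      simp only [hψ]
      rw [e, mul_add]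
      linarith
    exact le_trans (hBk k hkK) (le_trans h4 h5)
  -- inductive step
  have hstep : ∀ j : ℕ, K0 ≤ j → D j ≤ M * ψ j → D (j+1) ≤ M * ψ (j+1) := by
    intro j hj ih
    have hj1 : 1 ≤ j := le_trans hK01 hj
    have hx1 : (1:ℝ) ≤ (j:ℝ) := by exact_mod_cast hj1
    have hx0 : (0:ℝ) < (j:ℝ) := by linarith
    have hs : (0:ℝ) < (j:ℝ)^α2 := Real.rpow_pos_of_pos hx0 α2
    have hA : 4 / C1 ≤ (j:ℝ)^(1-α2) := hK1 j (le_trans hK0K1 hj)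
    have hB2 : C1 ≤ (j:ℝ)^α2 := hK2 j (le_trans hK0K2 hj)
    have hfac : 0 ≤ 1 - C1 / (j:ℝ)^α2 := by
      have : C1 / (j:ℝ)^α2 ≤ 1 := (div_le_one hs).mpr hB2
      linarith
    have hrecj := hK j (le_trans hK0K hj)
    -- identity for the noise term
    have i1 : (1:ℝ) / (j:ℝ)^(2*α2) + 1 / (j:ℝ)^(2*α1 - α2) = (1/(j:ℝ)^α2) * ψ j := by
      simp only [hψ]
      rw [show (2*α2) = α2 + α2 by ring, show (2*α1 - α2) = α2 + 2*(α1-α2) by ring,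
        Real.rpow_add hx0, Real.rpow_add hx0]
      have p2 : (0:ℝ) < (j:ℝ)^(2*(α1-α2)) := Real.rpow_pos_of_pos hx0 _
      field_simp
    have hψj : 0 < ψ j := hψpos j hj1
    -- decay of ψ
    have hdec : (1 - 2/(j:ℝ)) * ψ j ≤ ψ (j+1) := by
      have d1 := aux_decay (j:ℝ) α2 hx1 (by linarith)
      have d2 := aux_decay (j:ℝ) (2*(α1-α2)) hx1 (by linarith)
      have hcast : ((j+1 : ℕ):ℝ) = (j:ℝ) + 1 := by push_cast; ring
      simp only [hψ]
      rw [hcast, mul_add]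
      exact add_le_add d1 d2
    -- coefficient inequality
    have hMC1 : 2*C2 ≤ M*C1 := by
      rw [div_le_iff₀ hC1] at hMC; linarith
    have key : 2*M*(j:ℝ)^α2 ≤ (M*C1 - C2) * (j:ℝ) := by
      calc 2*M*(j:ℝ)^α2 = (M*C1/2) * (4/C1) * (j:ℝ)^α2 := by field_simp; ring
        _ ≤ (M*C1/2) * (j:ℝ)^(1-α2) * (j:ℝ)^α2 := by
            apply mul_le_mul_of_nonneg_right _ hs.le
            exact mul_le_mul_of_nonneg_left hA (by positivity)
        _ = (M*C1/2) * (j:ℝ) := by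
            rw [mul_assoc, ← Real.rpow_add hx0, show (1-α2)+α2 = 1 by ring, Real.rpow_one]
        _ ≤ (M*C1 - C2) * (j:ℝ) := by
            apply mul_le_mul_of_nonneg_right _ hx0.le
            linarith
    have hcoef : (1 - C1/(j:ℝ)^α2)*M + C2*(1/(j:ℝ)^α2) ≤ M*(1-2/(j:ℝ)) := by
      have e : 2*M/(j:ℝ) ≤ (M*C1 - C2)/(j:ℝ)^α2 := by
        rw [div_le_div_iff₀ hx0 hs]; linarith [key]
      have e2 : (M*C1 - C2)/(j:ℝ)^α2 = C1/(j:ℝ)^α2*M - C2*(1/(j:ℝ)^α2) := by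
        field_simp
      have e3 : M*(1-2/(j:ℝ)) = M - 2*M/(j:ℝ) := by field_simp
      rw [e3]
      rw [e2] at e
      linarith
    calc D (j+1) ≤ (1 - C1 / (j:ℝ)^α2) * D j
          + C2 * (1/(j:ℝ)^(2*α2) + 1/(j:ℝ)^(2*α1-α2)) := hrecj
      _ ≤ (1 - C1 / (j:ℝ)^α2) * (M * ψ j) + C2 * ((1/(j:ℝ)^α2) * ψ j) := by
          rw [i1]
          exact add_le_add_left (mul_le_mul_of_nonneg_left ih hfac) _
      _ = ((1 - C1/(j:ℝ)^α2)*M + C2*(1/(j:ℝ)^α2)) * ψ j := by ring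
      _ ≤ (M*(1-2/(j:ℝ))) * ψ j := mul_le_mul_of_nonneg_right hcoef hψj.le
      _ = M * ((1-2/(j:ℝ)) * ψ j) := by ring
      _ ≤ M * ψ (j+1) := mul_le_mul_of_nonneg_left hdec hM0.le
  have hind : ∀ k : ℕ, K0 ≤ k → D k ≤ M * ψ k := by
    intro k hk
    induction k, hk using Nat.le_induction with
    | base => exact hbase K0 hK01 le_rfl
    | succ j hj ihj => exact hstep j hj ihj
  refine ⟨M, hM0, fun k hk => ?_⟩
  rcases le_or_gt k K0 with h | h
  · exact hbase k hk h
  · exact hind k h.le
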